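/- Let A be an N×N real matrix, ε > 0, φ ∈ ℝ, and θ₀ = (θ₁,…,θ_N) ∈ ℝ^N. Suppose the complex vector x₀ with components (x₀)_k = exp(i θ_k) is an eigenvector of A associated with a complex eigenvalue λ such that λ exp(−iφ) is real. Then for every t ≥ 0 the solution x(t) = exp(t ε e^{−iφ} A) x₀ of the phase-lag analytical Kuramoto model satisfies x(t) = exp(t ε e^{−iφ} λ) x₀, and for every index k the complex argument of x(t)_k equals the complex argument of (x₀)_k. (That is, θ₀ is an equilibrium point of the phase-lag analytical Kuramoto model.) -/

import Mathlib

open Complex Matrix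

open Complex Matrix
attribute [local instance] Matrix.linftyOpNormedRing Matrix.linftyOpNormedAlgebra

lemma exp_mulVec_eigenvector {N : ℕ} (M : Matrix (Fin N) (Fin N) ℂ) (x : Fin N → ℂ) (c : ℂ)
    (hx : M.mulVec x = c • x) :
    (NormedSpace.exp M).mulVec x = Complex.exp c • x := by
  have hpow : ∀ n : ℕ, (M ^ n).mulVec x = c ^ n • x := by
    intro n
    induction n with
    | zero => simp
    | succ n ih =>
      rw [pow_succ, ← Matrix.mulVec_mulVec, hx, Matrix.mulVec_smul, ih, smul_smul, pow_succ,
        mul_comm]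
  let f : Matrix (Fin N) (Fin N) ℂ →ₗ[ℂ] (Fin N → ℂ) :=
    { toFun := fun M => M.mulVec x
      map_add' := fun a b => Matrix.add_mulVec a b x
      map_smul' := fun r a => (Matrix.smul_mulVec r a x) }
  have hf : Continuous f := f.continuous_of_finiteDimensional
  have hsum : Summable fun n : ℕ => ((Nat.factorial n : ℂ))⁻¹ • M ^ n := NormedSpace.expSeries_summable' M
  have := hf.continuousAt (x := ∑' n : ℕ, ((Nat.factorial n : ℂ))⁻¹ • M ^ n)
  have key : f (NormedSpace.exp M) = ∑' n : ℕ, f (((Nat.factorial n : ℂ))⁻¹ • M ^ n) := by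
    rw [NormedSpace.exp_eq_tsum (𝕂 := ℂ)]
    exact (hsum.hasSum.map f hf).tsum_eq.symm
  have : (NormedSpace.exp M).mulVec x = ∑' n : ℕ, ((Nat.factorial n : ℂ))⁻¹ • (c ^ n • x) := by
    rw [show (NormedSpace.exp M).mulVec x = f (NormedSpace.exp M) from rfl, key]
    refine tsum_congr fun n => ?_
    show (((Nat.factorial n : ℂ))⁻¹ • M ^ n).mulVec x = _
    rw [Matrix.smul_mulVec, hpow]
  rw [this]
  have : Complex.exp c = ∑' n : ℕ, ((Nat.factorial n : ℂ))⁻¹ • c ^ n := by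
    rw [Complex.exp_eq_exp_ℂ, NormedSpace.exp_eq_tsum (𝕂 := ℂ)]
  rw [this]
  simp_rw [smul_smul]
  rw [Summable.tsum_smul_const (by simpa [smul_eq_mul] using NormedSpace.expSeries_summable' (𝕂 := ℂ) c)]
  simp [smul_eq_mul]


/-- If `x₀ = e^{iθ₀}` (componentwise) is an eigenvector of the real matrix `A`
associated with a complex eigenvalue `λ` such that `λ e^{−iφ}` is real, then for all
`t ≥ 0` the solution `x(t) = exp(t ε e^{−iφ} A) x₀` of the phase-lag analytical Kuramoto
model satisfies `x(t) = e^{t ε e^{−iφ} λ} x₀`, and componentwise the argument of `x(t)`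
equals that of `x₀`: `θ₀` is an equilibrium point of the phase-lag analytical
Kuramoto model. -/
theorem phase_lag_analytical_KM_equilibrium (N : ℕ) (A : Matrix (Fin N) (Fin N) ℝ)
    (ε : ℝ) (hε : 0 < ε) (φ : ℝ) (θ : Fin N → ℝ) (lam : ℂ)
    (hx : (A.map Complex.ofReal).mulVec (fun k => Complex.exp (Complex.I * θ k))
        = lam • fun k => Complex.exp (Complex.I * θ k))
    (hreal : (lam * Complex.exp (-(φ : ℂ) * Complex.I)).im = 0) :
    ∀ t : ℝ, 0 ≤ t →
      (NormedSpace.exp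
          (((t : ℂ) * (ε : ℂ) * Complex.exp (-(φ : ℂ) * Complex.I)) •
            A.map Complex.ofReal)).mulVec (fun k => Complex.exp (Complex.I * θ k))
        = Complex.exp ((t : ℂ) * (ε : ℂ) * Complex.exp (-(φ : ℂ) * Complex.I) * lam) •
          (fun k => Complex.exp (Complex.I * θ k)) ∧
      ∀ k : Fin N,
        ((NormedSpace.exp
            (((t : ℂ) * (ε : ℂ) * Complex.exp (-(φ : ℂ) * Complex.I)) •
              A.map Complex.ofReal)).mulVec
            (fun k => Complex.exp (Complex.I * θ k)) k).arg
          = (Complex.exp (Complex.I * θ k)).arg := by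
  intro t ht
  set x : Fin N → ℂ := fun k => Complex.exp (Complex.I * θ k) with hxdef
  set c : ℂ := (t : ℂ) * (ε : ℂ) * Complex.exp (-(φ : ℂ) * Complex.I) with hc
  have hM : (c • A.map Complex.ofReal).mulVec x = (c * lam) • x := by
    rw [Matrix.smul_mulVec, hx, smul_smul]
  have hmain := exp_mulVec_eigenvector (c • A.map Complex.ofReal) x (c * lam) hM
  refine ⟨hmain, fun k => ?_⟩
  rw [hmain]
  have him : (c * lam).im = 0 := by
    have h1 : c * lam = ((t * ε : ℝ) : ℂ) * (lam * Complex.exp (-(φ : ℂ) * Complex.I)) := by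
      rw [hc]; push_cast; ring
    rw [h1, Complex.mul_im, hreal, mul_zero, Complex.ofReal_im, zero_mul, add_zero]
  have hre : c * lam = ((c * lam).re : ℂ) := by
    apply Complex.ext <;> simp [him]
  rw [hre, ← Complex.ofReal_exp]
  exact Complex.arg_real_mul _ (Real.exp_pos _)
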